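/- The function f : ℂ → ℂ defined by f(z) = 0 if Re z ≤ 0 and f(z) = (Re z)² if Re z > 0 is continuously differentiable and satisfies ∂f/∂z̄ = |f|^{1/2} on the set where f ≠ 0 (indeed everywhere, up to the factor conventions: with f depending only on x, ∂f/∂z̄ = (1/2) f'(x), and (1/2)(x²)' = x = |x²|^{1/2} for x > 0). Hence the equation ∂f/∂z̄ = |f|^{1/2} admits nonzero solutions vanishing on an open set, exhibiting non-uniqueness. -/

import Mathlib

open Complex Asymptotics Filter

/-- The Wirtinger derivative ∂f/∂z̄ = (1/2)(∂f/∂x + i ∂f/∂y). -/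
noncomputable def wbar (f : ℂ → ℂ) (z : ℂ) : ℂ :=
  (1 / 2 : ℂ) * (fderiv ℝ f z 1 + Complex.I * fderiv ℝ f z Complex.I)

lemma maxsq_hasDerivAt (x : ℝ) :
    HasDerivAt (fun y : ℝ => max y 0 ^ 2) (2 * max x 0) x := by
  rcases lt_trichotomy x 0 with h | h | h
  · have he : (fun y : ℝ => max y 0 ^ 2) =ᶠ[nhds x] fun _ => (0 : ℝ) := by
      filter_upwards [Iio_mem_nhds h] with y hy
      simp [max_eq_right (le_of_lt (Set.mem_Iio.mp hy))]
    have := (hasDerivAt_const x (0 : ℝ)).congr_of_eventuallyEq he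
    simpa [max_eq_right h.le] using this
  · subst h
    rw [hasDerivAt_iff_isLittleO]
    simp only [max_self, ne_eq, OfNat.ofNat_ne_zero, not_false_eq_true, zero_pow, sub_zero,
      mul_zero, smul_zero]
    have h1 : (fun y : ℝ => max y 0 ^ 2) =O[nhds (0 : ℝ)] fun y => y * y := by
      apply IsBigO.of_bound 1
      filter_upwards with y
      have : |max y 0| ≤ |y| := by
        rcases le_or_gt y 0 with hy | hy
        · simp [max_eq_right hy]
        · simp [max_eq_left hy.le]
      calc ‖max y 0 ^ 2‖ = |max y 0| * |max y 0| := by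
            rw [sq]; simp [abs_mul]
        _ ≤ |y| * |y| := mul_le_mul this this (abs_nonneg _) (abs_nonneg _)
        _ = 1 * ‖y * y‖ := by simp [abs_mul]
    have h2 : (fun y : ℝ => y * y) =o[nhds (0 : ℝ)] fun y => y := by
      have : (fun y : ℝ => y) =o[nhds (0 : ℝ)] fun _ => (1 : ℝ) := by
        rw [isLittleO_one_iff]
        exact tendsto_id
      simpa using this.mul_isBigO (isBigO_refl (fun y : ℝ => y) _)
    exact h1.trans_isLittleO h2
  · have he : (fun y : ℝ => max y 0 ^ 2) =ᶠ[nhds x] fun y => y ^ 2 := by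
      filter_upwards [Ioi_mem_nhds h] with y hy
      simp [max_eq_left (le_of_lt (Set.mem_Ioi.mp hy))]
    have := (hasDerivAt_pow 2 x).congr_of_eventuallyEq he
    simpa [max_eq_left h.le] using this

noncomputable def Lre : ℂ →L[ℝ] ℂ := Complex.ofRealCLM.comp Complex.reCLM

lemma f_hasFDerivAt (z : ℂ) :
    HasFDerivAt (fun w : ℂ => ((max w.re 0 ^ 2 : ℝ) : ℂ)) ((2 * max z.re 0) • Lre) z := by
  have h1 : HasFDerivAt (fun w : ℂ => max w.re 0 ^ 2)
      ((2 * max z.re 0) • Complex.reCLM) z :=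
    (maxsq_hasDerivAt z.re).comp_hasFDerivAt z Complex.reCLM.hasFDerivAt
  have h2 := Complex.ofRealCLM.hasFDerivAt.comp z h1
  refine h2.congr_fderiv ?_
  ext v
  simp [Lre, mul_comm]

theorem stmt9 (f : ℂ → ℂ)
    (hf : ∀ z : ℂ, f z = if 0 < z.re then ((z.re ^ 2 : ℝ) : ℂ) else 0) :
    ContDiff ℝ 1 f ∧
    (∀ z : ℂ, z.re ≤ 0 → f z = 0) ∧
    (∃ z : ℂ, f z ≠ 0) ∧
    (∀ z : ℂ, wbar f z = ((‖f z‖ ^ ((1 : ℝ) / 2) : ℝ) : ℂ)) := by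
  have hfe : f = fun w : ℂ => ((max w.re 0 ^ 2 : ℝ) : ℂ) := by
    funext w
    rw [hf w]
    rcases lt_or_ge 0 w.re with h | h
    · simp [h, max_eq_left h.le]
    · simp [not_lt.2 h, max_eq_right h]
  have hfd : ∀ z : ℂ, fderiv ℝ f z = (2 * max z.re 0) • Lre := by
    intro z
    rw [hfe]
    exact (f_hasFDerivAt z).fderiv
  refine ⟨?_, ?_, ?_, ?_⟩
  · rw [contDiff_one_iff_fderiv]
    constructor
    · intro z
      rw [hfe]
      exact (f_hasFDerivAt z).differentiableAt
    · have : Continuous fun z : ℂ => (2 * max z.re 0) • Lre := by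
        exact ((continuous_const.mul ((Complex.continuous_re).max continuous_const)).smul
          continuous_const)
      simpa [funext hfd] using this
  · intro z hz
    rw [hf z]
    simp [not_lt.2 hz]
  · refine ⟨1, ?_⟩
    rw [hf 1]
    norm_num
  · intro z
    have hm : (0 : ℝ) ≤ max z.re 0 := le_max_right _ _
    have hL1 : Lre (1 : ℂ) = 1 := by simp [Lre]
    have hLI : Lre Complex.I = 0 := by simp [Lre]
    rw [wbar, hfd z]
    simp only [ContinuousLinearMap.smul_apply, hL1, hLI, smul_zero, mul_zero, add_zero]
    have hnorm : ‖f z‖ = max z.re 0 ^ 2 := by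
      rw [hfe]
      simp [Complex.norm_real, _root_.abs_of_nonneg (pow_nonneg hm 2)]
    rw [hnorm, ← Real.sqrt_eq_rpow, Real.sqrt_sq hm]

    simp [Complex.real_smul]
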